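/- For n ≥ 2 and 0 ≤ p ≤ n−2, every element of IC_n of height p is a finite product of elements of IC_n of height p+1. -/

import Mathlib

open scoped Classical

namespace ICCatalan

/-- Partial injective transformations on `Fin n` (representing the chain `[n] = {1,…,n}`). -/
abbrev PT (n : ℕ) := Fin n ≃. Fin n

/-- Composition (left-to-right, `x(αβ) = (xα)β`) makes `PT n` a monoid. -/
noncomputable instance instMonoidPT (n : ℕ) : Monoid (PT n) where
  mul f g := f.trans g
  one := PEquiv.refl (Fin n)
  mul_assoc := PEquiv.trans_assoc
  one_mul := PEquiv.refl_trans
  mul_one := PEquiv.trans_refl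

lemma mul_def {n : ℕ} (f g : PT n) : f * g = f.trans g := rfl

/-- The domain of a partial transformation. -/
def pdom {n : ℕ} (f : PT n) : Set (Fin n) := {x | ∃ y, f x = some y}

/-- The image of a partial transformation. -/
def pim {n : ℕ} (f : PT n) : Set (Fin n) := {y | ∃ x, f x = some y}

/-- The height `|im f|` of a partial transformation. -/
noncomputable def height {n : ℕ} (f : PT n) : ℕ := (pim f).ncard

/-- `f` is order-decreasing: `xf ≤ x` on the domain. -/
def IsDecr {n : ℕ} (f : PT n) : Prop := ∀ x y : Fin n, f x = some y → y ≤ x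

/-- `f` is isotone: `x ≤ y` implies `xf ≤ yf` on the domain. -/
def IsIso {n : ℕ} (f : PT n) : Prop :=
  ∀ x₁ x₂ y₁ y₂ : Fin n, f x₁ = some y₁ → f x₂ = some y₂ → x₁ ≤ x₂ → y₁ ≤ y₂

/-- The injective partial Catalan monoid `IC_n`: all isotone order-decreasing
partial injective transformations of `[n]`. -/
def IC (n : ℕ) : Set (PT n) := {f | IsIso f ∧ IsDecr f}

/-- `Q'_n = {α ∈ IC_n : 1 ∉ dom α}` (the least element of `Fin n` plays the role of `1 ∈ [n]`). -/
def Qp (n : ℕ) : Set (PT n) := {f | f ∈ IC n ∧ ∀ x : Fin n, (x : ℕ) = 0 → f x = none}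

/-- `S¹ : S` with an identity adjoined (realized inside `PT n`). -/
def SOne {n : ℕ} (S : Set (PT n)) : Set (PT n) := S ∪ {1}

/-- The starred Green relation `L*` of the subsemigroup `S`. -/
def LStar {n : ℕ} (S : Set (PT n)) (a b : PT n) : Prop :=
  ∀ x ∈ SOne S, ∀ y ∈ SOne S, (a * x = a * y ↔ b * x = b * y)

/-- The starred Green relation `R*` of the subsemigroup `S`. -/
def RStar {n : ℕ} (S : Set (PT n)) (a b : PT n) : Prop :=
  ∀ x ∈ SOne S, ∀ y ∈ SOne S, (x * a = y * a ↔ x * b = y * b)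

/-- The starred Green relation `H* = L* ∩ R*`. -/
def HStar {n : ℕ} (S : Set (PT n)) (a b : PT n) : Prop :=
  LStar S a b ∧ RStar S a b

/-- The partial identity on a subset `A` of `[n]`. -/
noncomputable def pid {n : ℕ} (A : Set (Fin n)) : PT n := PEquiv.ofSet A

/-- An essential element: exactly one point `y` of the domain is moved, and `yf = y - 1`. -/
def IsEssential {n : ℕ} (f : PT n) : Prop :=
  ∃ y z : Fin n, f y = some z ∧ (z : ℕ) + 1 = (y : ℕ) ∧
    ∀ x w : Fin n, f x = some w → w ≠ x → x = y

/-- The shift of `f`: the number of non-fixed points of its domain. -/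
noncomputable def shift {n : ℕ} (f : PT n) : ℕ := {x : Fin n | ∃ w, f x = some w ∧ w ≠ x}.ncard


section Aux
-- ### Auxiliary machinery for the proof of stmt16 ###
variable {n : ℕ}

lemma trans_apply (f g : PT n) (x : Fin n) : (f.trans g) x = (f x).bind g := rfl

lemma pt_inj {f : PT n} {x₁ x₂ y : Fin n} (h1 : f x₁ = some y) (h2 : f x₂ = some y) :
    x₁ = x₂ := by
  have a1 := f.eq_some_iff.mpr h1
  have a2 := f.eq_some_iff.mpr h2
  rw [a1] at a2
  exact Option.some_injective _ a2

lemma iso_strict {f : PT n} (hf : f ∈ IC n) {x₁ x₂ y₁ y₂ : Fin n}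
    (h1 : f x₁ = some y₁) (h2 : f x₂ = some y₂) (h : x₁ < x₂) : y₁ < y₂ := by
  have hle := hf.1 x₁ x₂ y₁ y₂ h1 h2 h.le
  rcases lt_or_eq_of_le hle with h' | h'
  · exact h'
  · subst h'; exact absurd (pt_inj h1 h2) h.ne

lemma symm_none_of_not_pim {f : PT n} {y : Fin n} (h : y ∉ pim f) : f.symm y = none := by
  rcases hy : f.symm y with _ | x
  · rfl
  · exact absurd ⟨x, f.eq_some_iff.mp hy⟩ h

lemma none_of_not_pdom {f : PT n} {x : Fin n} (h : x ∉ pdom f) : f x = none := by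
  rcases hy : f x with _ | y
  · rfl
  · exact absurd ⟨y, hy⟩ h

lemma pid_apply (A : Set (Fin n)) (x : Fin n) :
    pid A x = if x ∈ A then some x else none := rfl

lemma pid_eq_some {A : Set (Fin n)} {x y : Fin n} :
    pid A x = some y ↔ x = y ∧ x ∈ A := by
  rw [pid_apply]
  split_ifs with h <;> simp [h, eq_comm]

lemma pid_symm (A : Set (Fin n)) : (pid A).symm = pid A := rfl

lemma pid_IC (A : Set (Fin n)) : pid A ∈ IC n := by
  constructor
  · intro x₁ x₂ y₁ y₂ h1 h2 hle
    obtain ⟨rfl, -⟩ := pid_eq_some.mp h1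
    obtain ⟨rfl, -⟩ := pid_eq_some.mp h2
    exact hle
  · intro x y h
    obtain ⟨rfl, -⟩ := pid_eq_some.mp h
    exact le_rfl

lemma pim_pid (A : Set (Fin n)) : pim (pid A) = A := by
  ext y
  constructor
  · rintro ⟨x, hx⟩
    obtain ⟨rfl, h⟩ := pid_eq_some.mp hx
    exact h
  · intro h
    exact ⟨y, pid_eq_some.mpr ⟨rfl, h⟩⟩

/-- Adjoin the pair `(a, b)` to a partial injection. -/
def adjoin (f : PT n) (a b : Fin n) (ha : f a = none) (hb : f.symm b = none) : PT n where
  toFun x := if x = a then some b else f x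
  invFun y := if y = b then some a else f.symm y
  inv x y := by
    split_ifs with hy hx hx
    · subst hy; subst hx; simp
    · subst hy
      constructor
      · intro h
        exact absurd (Option.some_injective _ h).symm hx
      · intro h
        have := f.eq_some_iff.mpr h
        rw [hb] at this
        exact absurd this (by simp)
    · subst hx
      constructor
      · intro h
        have := f.eq_some_iff.mp h
        rw [ha] at this
        exact absurd this (by simp)
      · intro h
        exact absurd (Option.some_injective _ h).symm hy
    · exact f.eq_some_iff


lemma adjoin_apply (f : PT n) (a b : Fin n) (ha hb) (x : Fin n) :
    adjoin f a b ha hb x = if x = a then some b else f x := rfl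

lemma adjoin_symm_apply (f : PT n) (a b : Fin n) (ha hb) (y : Fin n) :
    (adjoin f a b ha hb).symm y = if y = b then some a else f.symm y := rfl

lemma adjoin_eq_some {f : PT n} {a b : Fin n} {ha hb} {x y : Fin n} :
    adjoin f a b ha hb x = some y ↔ (x = a ∧ y = b) ∨ (x ≠ a ∧ f x = some y) := by
  rw [adjoin_apply]
  split_ifs with h <;> simp [h, eq_comm]

lemma pim_adjoin (f : PT n) (a b : Fin n) (ha hb) :
    pim (adjoin f a b ha hb) = insert b (pim f) := by
  ext y
  constructor
  · rintro ⟨x, hx⟩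
    rcases adjoin_eq_some.mp hx with ⟨-, rfl⟩ | ⟨-, h⟩
    · exact Set.mem_insert _ _
    · exact Set.mem_insert_of_mem _ ⟨x, h⟩
  · rintro (rfl | ⟨x, hx⟩)
    · exact ⟨a, adjoin_eq_some.mpr (Or.inl ⟨rfl, rfl⟩)⟩
    · refine ⟨x, adjoin_eq_some.mpr (Or.inr ⟨?_, hx⟩)⟩
      rintro rfl
      rw [ha] at hx; exact absurd hx (by simp)

lemma IC_adjoin {f : PT n} {a b : Fin n} (ha : f a = none) (hb : f.symm b = none)
    (hf : f ∈ IC n) (hba : b ≤ a)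
    (h1 : ∀ x y, f x = some y → x < a → y < b)
    (h2 : ∀ x y, f x = some y → a < x → b < y) :
    adjoin f a b ha hb ∈ IC n := by
  constructor
  · intro x₁ x₂ y₁ y₂ hx1 hx2 hle
    rcases adjoin_eq_some.mp hx1 with ⟨rfl, rfl⟩ | ⟨hne1, hf1⟩ <;>
      rcases adjoin_eq_some.mp hx2 with ⟨rfl, rfl⟩ | ⟨hne2, hf2⟩
    · exact le_rfl
    · exact (h2 _ _ hf2 (lt_of_le_of_ne hle (Ne.symm hne2))).le
    · exact (h1 _ _ hf1 (lt_of_le_of_ne hle hne1)).le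
    · exact hf.1 _ _ _ _ hf1 hf2 hle
  · intro x y h
    rcases adjoin_eq_some.mp h with ⟨rfl, rfl⟩ | ⟨-, hf1⟩
    · exact hba
    · exact hf.2 _ _ hf1

/-- Remove the point `d` from the domain of a partial injection. -/
def del (f : PT n) (d : Fin n) : PT n where
  toFun x := if x = d then none else f x
  invFun y := if f.symm y = some d then none else f.symm y
  inv x y := by
    split_ifs with hy hx hx
    · subst hx; simp
    · constructor
      · intro h; exact absurd h (by simp)
      · intro h
        have := f.eq_some_iff.mpr h
        rw [hy] at this
        exact absurd (Option.some_injective _ this).symm hx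
    · subst hx
      constructor
      · intro h; exact absurd h hy
      · intro h; exact absurd h (by simp)
    · exact f.eq_some_iff

lemma del_apply (f : PT n) (d x : Fin n) :
    del f d x = if x = d then none else f x := rfl

lemma del_symm_apply (f : PT n) (d y : Fin n) :
    (del f d).symm y = if f.symm y = some d then none else f.symm y := rfl

lemma del_eq_some {f : PT n} {d x y : Fin n} :
    del f d x = some y ↔ x ≠ d ∧ f x = some y := by
  rw [del_apply]
  split_ifs with h <;> simp [h]

lemma IC_del {f : PT n} (hf : f ∈ IC n) (d : Fin n) : del f d ∈ IC n := by
  constructor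
  · intro x₁ x₂ y₁ y₂ h1 h2 hle
    exact hf.1 _ _ _ _ (del_eq_some.mp h1).2 (del_eq_some.mp h2).2 hle
  · intro x y h
    exact hf.2 _ _ (del_eq_some.mp h).2

lemma pim_del {f : PT n} {d e : Fin n} (hd : f d = some e) :
    pim (del f d) = pim f \ {e} := by
  ext y
  constructor
  · rintro ⟨x, hx⟩
    obtain ⟨hne, hfx⟩ := del_eq_some.mp hx
    refine ⟨⟨x, hfx⟩, ?_⟩
    simp only [Set.mem_singleton_iff]
    rintro rfl
    exact hne (pt_inj hfx hd)
  · rintro ⟨⟨x, hx⟩, hne⟩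
    refine ⟨x, del_eq_some.mpr ⟨?_, hx⟩⟩
    rintro rfl
    rw [hd] at hx
    exact hne (by simpa using hx.symm)

lemma ncard_pdom_eq (f : PT n) : (pdom f).ncard = (pim f).ncard := by
  have himg : pim f = (fun x => (f x).getD x) '' pdom f := by
    ext y
    constructor
    · rintro ⟨x, hx⟩
      exact ⟨x, ⟨y, hx⟩, by simp [hx]⟩
    · rintro ⟨x, ⟨z, hz⟩, hxy⟩
      dsimp only at hxy
      rw [hz] at hxy
      simp only [Option.getD_some] at hxy
      exact ⟨x, by rw [hz, hxy]⟩
  rw [himg]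
  refine (Set.ncard_image_of_injOn ?_).symm
  rintro x₁ ⟨y₁, h1⟩ x₂ ⟨y₂, h2⟩ h
  dsimp only at h
  rw [h1, h2] at h
  simp only [Option.getD_some] at h
  subst h
  exact pt_inj h1 h2

lemma exists_not_mem {S : Set (Fin n)} (h : S.ncard < n) : ∃ s, s ∉ S := by
  by_contra hc
  push_neg at hc
  have : S = Set.univ := Set.eq_univ_of_forall hc
  rw [this, Set.ncard_univ, Nat.card_eq_fintype_card, Fintype.card_fin] at h
  omega


noncomputable def dispterm (f : PT n) (x : Fin n) : ℕ :=
  (x : ℕ) - (((f x).map Fin.val).getD x)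

noncomputable def disp (f : PT n) : ℕ := ∑ x : Fin n, dispterm f x

lemma dispterm_none {f : PT n} {x : Fin n} (h : f x = none) : dispterm f x = 0 := by
  simp [dispterm, h]

lemma dispterm_some {f : PT n} {x y : Fin n} (h : f x = some y) :
    dispterm f x = (x : ℕ) - (y : ℕ) := by
  simp [dispterm, h]

lemma fix_lift {p : ℕ} (hn : 2 ≤ n) (hp : p ≤ n - 2) {g : PT n} (hg : g ∈ IC n)
    (hh : height g = p) {s : Fin n} (hsd : g s = none) (hsi : g.symm s = none)
    (h1 : ∀ x y, g x = some y → x < s → y < s)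
    (h2 : ∀ x y, g x = some y → s < x → s < y) :
    g ∈ Subsemigroup.closure {β : PT n | β ∈ IC n ∧ height β = p + 1} := by
  have hsim : s ∉ pim g := by
    rintro ⟨x, hx⟩
    rw [g.eq_some_iff.mpr hx] at hsi
    exact absurd hsi (by simp)
  set β := adjoin g s s hsd hsi with hβ
  have hβIC : β ∈ IC n := IC_adjoin _ _ hg le_rfl h1 h2
  have hβh : height β = p + 1 := by
    rw [height, hβ, pim_adjoin, Set.ncard_insert_of_notMem hsim, ← height, hh]
  have hcard : (insert s (pim g)).ncard < n := by
    rw [Set.ncard_insert_of_notMem hsim]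
    rw [height] at hh
    omega
  obtain ⟨w, hw⟩ := exists_not_mem hcard
  have hws : w ≠ s := fun h => hw (h ▸ Set.mem_insert _ _)
  have hwim : w ∉ pim g := fun h => hw (Set.mem_insert_of_mem _ h)
  set γ := pid (insert w (pim g)) with hγ
  have hγh : height γ = p + 1 := by
    rw [height, hγ, pim_pid, Set.ncard_insert_of_notMem hwim, ← height, hh]
  have hprod : g = β * γ := by
    rw [mul_def]
    refine PEquiv.ext fun x => ?_
    rw [trans_apply]
    by_cases hxs : x = s
    · subst hxs
      rw [hβ, adjoin_apply, if_pos rfl, hsd, Option.bind_some, hγ, pid_apply, if_neg]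
      rintro (h | h)
      · exact hws h.symm
      · exact hsim h
    · rw [hβ, adjoin_apply, if_neg hxs]
      rcases hgx : g x with _ | y
      · rfl
      · have hmem : y ∈ insert w (pim g) := Set.mem_insert_of_mem _ ⟨x, hgx⟩
        rw [Option.bind_some, hγ, pid_apply, if_pos hmem]
  rw [hprod]
  exact mul_mem (Subsemigroup.subset_closure ⟨hβIC, hβh⟩)
    (Subsemigroup.subset_closure ⟨pid_IC _, hγh⟩)


lemma base_case {p : ℕ} (hn : 2 ≤ n) (hp : p ≤ n - 2) {α : PT n} (hα : α ∈ IC n)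
    (hh : height α = p) (h0 : disp α = 0) :
    α ∈ Subsemigroup.closure {β : PT n | β ∈ IC n ∧ height β = p + 1} := by
  have hfix : ∀ x y : Fin n, α x = some y → y = x := by
    intro x y hxy
    have hz := Finset.sum_eq_zero_iff.mp h0 x (Finset.mem_univ x)
    rw [dispterm_some hxy] at hz
    have hle := Fin.le_def.mp (hα.2 x y hxy)
    exact Fin.ext (by omega)
  have hpd : ∀ x : Fin n, x ∈ pdom α ↔ x ∈ pim α := by
    intro x
    constructor
    · rintro ⟨y, hy⟩
      exact ⟨x, by rw [hy, hfix x y hy]⟩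
    · rintro ⟨z, hz⟩
      have hzx := hfix z x hz
      exact ⟨x, by rw [← hzx] at hz; exact hz⟩
  have hcard : (pim α).ncard < n := by
    rw [height] at hh
    omega
  obtain ⟨s, hs⟩ := exists_not_mem hcard
  have hsd : α s = none := none_of_not_pdom (fun h => hs ((hpd s).mp h))
  refine fix_lift hn hp hα hh hsd (symm_none_of_not_pim hs) ?_ ?_
  · intro x y hxy hlt
    rw [hfix x y hxy]
    exact hlt
  · intro x y hxy hlt
    rw [hfix x y hxy]
    exact hlt


lemma step_case {p : ℕ} (hn : 2 ≤ n) (hp : p ≤ n - 2) {α : PT n} (hα : α ∈ IC n)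
    (hh : height α = p) (h0 : disp α ≠ 0)
    (ih : ∀ α' : PT n, α' ∈ IC n → height α' = p → disp α' < disp α →
      α' ∈ Subsemigroup.closure {β : PT n | β ∈ IC n ∧ height β = p + 1}) :
    α ∈ Subsemigroup.closure {β : PT n | β ∈ IC n ∧ height β = p + 1} := by
  classical
  have hmoved : ∃ x : Fin n, ∃ y, α x = some y ∧ y < x := by
    by_contra hc
    push_neg at hc
    apply h0
    refine Finset.sum_eq_zero fun x _ => ?_
    rcases hx : α x with _ | y
    · exact dispterm_none hx
    · rw [dispterm_some hx]
      have h1 := Fin.le_def.mp (hα.2 x y hx)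
      have h2 := Fin.le_def.mp (hc x y hx)
      omega
  set M : Finset (Fin n) := Finset.univ.filter (fun x => ∃ y, α x = some y ∧ y < x) with hM
  have hMne : M.Nonempty := by
    obtain ⟨x, y, hxy, hyx⟩ := hmoved
    exact ⟨x, by simp only [hM, Finset.mem_filter]; exact ⟨Finset.mem_univ _, y, hxy, hyx⟩⟩
  set d := M.min' hMne with hdmin
  have hdM : d ∈ M := M.min'_mem hMne
  obtain ⟨e, hde, hed⟩ : ∃ y, α d = some y ∧ y < d := by
    have := hdM
    rw [hM, Finset.mem_filter] at this
    exact this.2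
  have hedv := Fin.lt_def.mp hed
  have hdpos : 1 ≤ (d : ℕ) := by omega
  set d' : Fin n := ⟨(d : ℕ) - 1, by have := d.isLt; omega⟩ with hd'
  have hd'v : (d' : ℕ) = (d : ℕ) - 1 := rfl
  have hd'd : d' < d := Fin.lt_def.mpr (by omega)
  have hed' : e ≤ d' := Fin.le_def.mpr (by omega)
  have hd'ne : d' ≠ d := ne_of_lt hd'd
  have hd'dom : α d' = none := by
    rcases hw : α d' with _ | w
    · rfl
    · exfalso
      have hwe : w < e := iso_strict hα hw hde hd'd
      have hmem : d' ∈ M := by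
        rw [hM, Finset.mem_filter]
        exact ⟨Finset.mem_univ _, w, hw, lt_of_lt_of_le hwe hed'⟩
      exact absurd (M.min'_le d' hmem) (not_le.mpr hd'd)
  have hdpdom : d ∈ pdom α := ⟨e, hde⟩
  have hd'pdom : d' ∉ pdom α := by
    rintro ⟨w, hw⟩
    rw [hd'dom] at hw
    exact absurd hw (by simp)
  -- the two factors
  have ha1 : pid (pdom α \ {d}) d = none := by
    rw [pid_apply, if_neg]
    simp
  have hb1 : (pid (pdom α \ {d})).symm d' = none := by
    rw [pid_symm, pid_apply, if_neg]
    exact fun h => hd'pdom h.1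
  set α₁ := adjoin (pid (pdom α \ {d})) d d' ha1 hb1 with hα₁def
  have ha2 : del α d d' = none := by rw [del_apply, if_neg hd'ne, hd'dom]
  have hb2 : (del α d).symm e = none := by
    rw [del_symm_apply, if_pos (α.eq_some_iff.mpr hde)]
  set α₂ := adjoin (del α d) d' e ha2 hb2 with hα₂def
  -- the factorization
  have hprod : α = α₁ * α₂ := by
    rw [mul_def]
    refine PEquiv.ext fun x => ?_
    rw [trans_apply]
    by_cases hxd : x = d
    · subst hxd
      rw [hα₁def, adjoin_apply, if_pos rfl, Option.bind_some, hα₂def, adjoin_apply,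
        if_pos rfl, hde]
    · rw [hα₁def, adjoin_apply, if_neg hxd, pid_apply]
      by_cases hxA : x ∈ pdom α \ {d}
      · have hxd' : x ≠ d' := fun h => hd'pdom (h ▸ hxA.1)
        rw [if_pos hxA, Option.bind_some, hα₂def, adjoin_apply, if_neg hxd', del_apply,
          if_neg hxd]
      · rw [if_neg hxA, Option.bind_none]
        exact none_of_not_pdom (fun h => hxA ⟨h, hxd⟩)
  -- facts about α₁
  have hpcard : (pdom α).ncard = p := by
    rw [ncard_pdom_eq]
    rw [height] at hh
    exact hh
  have hppos : 1 ≤ p := by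
    have hpos : 0 < (pdom α).ncard := (Set.ncard_pos (Set.toFinite _)).mpr ⟨d, hdpdom⟩
    omega
  have hIC1 : α₁ ∈ IC n := by
    refine IC_adjoin _ _ (pid_IC _) hd'd.le ?_ ?_
    · intro x y hxy hlt
      obtain ⟨heq, hmem⟩ := pid_eq_some.mp hxy
      subst heq
      have hne : (x : ℕ) ≠ (d' : ℕ) := fun h => hd'pdom (Fin.ext h ▸ hmem.1)
      have hv := Fin.lt_def.mp hlt
      exact Fin.lt_def.mpr (by omega)
    · intro x y hxy hlt
      obtain ⟨rfl, -⟩ := pid_eq_some.mp hxy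
      exact lt_trans hd'd hlt
  have himα₁ : pim α₁ = insert d' (pdom α \ {d}) := by
    rw [hα₁def, pim_adjoin, pim_pid]
  have hh1 : height α₁ = p := by
    rw [height, himα₁, Set.ncard_insert_of_notMem (fun h => hd'pdom h.1),
      Set.ncard_diff_singleton_of_mem hdpdom, hpcard]
    omega
  have hmem1 : α₁ ∈ Subsemigroup.closure {β : PT n | β ∈ IC n ∧ height β = p + 1} := by
    have hcard : (insert d' (pdom α)).ncard < n := by
      have h1 := Set.ncard_insert_le d' (pdom α)
      omega
    obtain ⟨s, hs⟩ := exists_not_mem hcard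
    have hsd' : s ≠ d' := fun h => hs (h ▸ Set.mem_insert _ _)
    have hsA : s ∉ pdom α := fun h => hs (Set.mem_insert_of_mem _ h)
    have hsd : s ≠ d := fun h => hsA (h ▸ hdpdom)
    have hs1 : α₁ s = none := by
      rw [hα₁def, adjoin_apply, if_neg hsd, pid_apply, if_neg (fun h => hsA h.1)]
    have hs2 : α₁.symm s = none := by
      rw [hα₁def, adjoin_symm_apply, if_neg hsd', pid_symm, pid_apply,
        if_neg (fun h => hsA h.1)]
    refine fix_lift hn hp hIC1 hh1 hs1 hs2 ?_ ?_
    · intro x y hxy hlt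
      rcases adjoin_eq_some.mp hxy with ⟨rfl, rfl⟩ | ⟨-, hpd⟩
      · exact lt_trans hd'd hlt
      · obtain ⟨rfl, -⟩ := pid_eq_some.mp hpd
        exact hlt
    · intro x y hxy hlt
      rcases adjoin_eq_some.mp hxy with ⟨rfl, rfl⟩ | ⟨-, hpd⟩
      · have hv := Fin.lt_def.mp hlt
        have hne : (s : ℕ) ≠ (d' : ℕ) := fun h => hsd' (Fin.ext h)
        exact Fin.lt_def.mpr (by omega)
      · obtain ⟨rfl, -⟩ := pid_eq_some.mp hpd
        exact hlt
  -- facts about α₂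
  have hIC2 : α₂ ∈ IC n := by
    refine IC_adjoin _ _ (IC_del hα d) hed' ?_ ?_
    · intro x y hxy hlt
      obtain ⟨hxd, hax⟩ := del_eq_some.mp hxy
      exact iso_strict hα hax hde (lt_trans hlt hd'd)
    · intro x y hxy hlt
      obtain ⟨hxd, hax⟩ := del_eq_some.mp hxy
      have hdx : d < x := by
        have h1 := Fin.lt_def.mp hlt
        have hne : (x : ℕ) ≠ (d : ℕ) := fun h => hxd (Fin.ext h)
        exact Fin.lt_def.mpr (by omega)
      exact iso_strict hα hde hax hdx
  have hepim : e ∈ pim α := ⟨d, hde⟩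
  have hh2 : height α₂ = p := by
    rw [height, hα₂def, pim_adjoin, pim_del hde, Set.insert_diff_singleton,
      Set.insert_eq_self.mpr hepim]
    rw [height] at hh
    exact hh
  -- displacement decreases
  have hα₂d : α₂ d = none := by
    rw [hα₂def, adjoin_apply, if_neg (Ne.symm hd'ne), del_apply, if_pos rfl]
  have hα₂d' : α₂ d' = some e := by rw [hα₂def, adjoin_apply, if_pos rfl]
  have hrest : ∀ x : Fin n, x ≠ d → x ≠ d' → α₂ x = α x := by
    intro x h1 h2
    rw [hα₂def, adjoin_apply, if_neg h2, del_apply, if_neg h1]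
  have hsplit : ∀ g : PT n, disp g =
      dispterm g d + dispterm g d' + ∑ x ∈ (Finset.univ.erase d).erase d', dispterm g x := by
    intro g
    rw [disp, ← Finset.add_sum_erase _ _ (Finset.mem_univ d),
      ← Finset.add_sum_erase _ _ (Finset.mem_erase.mpr ⟨hd'ne, Finset.mem_univ d'⟩),
      add_assoc]
  have hdisp2 : disp α₂ < disp α := by
    have heq : ∑ x ∈ (Finset.univ.erase d).erase d', dispterm α₂ x
        = ∑ x ∈ (Finset.univ.erase d).erase d', dispterm α x := by
      refine Finset.sum_congr rfl fun x hx => ?_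
      rw [Finset.mem_erase, Finset.mem_erase] at hx
      simp only [dispterm, hrest x hx.2.1 hx.1]
    rw [hsplit α, hsplit α₂, heq, dispterm_some hde, dispterm_none hd'dom,
      dispterm_none hα₂d, dispterm_some hα₂d']
    have hev := Fin.le_def.mp hed'
    omega
  rw [hprod]
  exact mul_mem hmem1 (ih α₂ hIC2 hh2 hdisp2)


lemma key (p : ℕ) (hn : 2 ≤ n) (hp : p ≤ n - 2) :
    ∀ D : ℕ, ∀ α : PT n, α ∈ IC n → height α = p → disp α ≤ D →
      α ∈ Subsemigroup.closure {β : PT n | β ∈ IC n ∧ height β = p + 1} := by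
  intro D
  induction D with
  | zero =>
    intro α hα hh hd
    exact base_case hn hp hα hh (Nat.le_zero.mp hd)
  | succ D ihD =>
    intro α hα hh hd
    by_cases h0 : disp α = 0
    · exact base_case hn hp hα hh h0
    · refine step_case hn hp hα hh h0 (fun α' h1 h2 h3 => ihD α' h1 h2 ?_)
      omega


end Aux

/-- for `n ≥ 2` and `0 ≤ p ≤ n-2`, every element of `IC_n` of height `p`
is a finite product of elements of `IC_n` of height `p+1`. -/
theorem stmt16 (n p : ℕ) (hn : 2 ≤ n) (hp : p ≤ n - 2) :
    ∀ α ∈ IC n, height α = p →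
      α ∈ Subsemigroup.closure {β : PT n | β ∈ IC n ∧ height β = p + 1} := by
  intro α hα hh
  exact key p hn hp (disp α) α hα hh le_rfl

end ICCatalan
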